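/- Let α > 1, d ∈ ℕ, and for each coordinate j ∈ {1,…,d} let μ_j, μ'_j ∈ ℝ and s_j, s'_j > 0 satisfy α s'_j + (1−α) s_j > 0. Then the Rényi divergence of order α between the product measures ⊗_{j=1}^d N(μ_j, s_j) and ⊗_{j=1}^d N(μ'_j, s'_j) on ℝ^d (i.e. Gaussians with diagonal covariances diag(s_1,…,s_d) and diag(s'_1,…,s'_d)) equals Σ_{j=1}^d [ α (μ_j − μ'_j)² / (2(α s'_j + (1−α) s_j)) − (1/(2(α−1))) log( (α s'_j + (1−α) s_j) / ( s_j^{1−α} (s'_j)^{α} ) ) ]. -/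

import Mathlib

open MeasureTheory Real

open Classical in
/-- Rényi divergence of order `a` between measures `P` and `Q`:
`(a-1)⁻¹ log ∫ (dP/dQ)^a dQ`, equal to `⊤` when `P` is not absolutely continuous
with respect to `Q` (or the integral is infinite). -/
noncomputable def renyiDiv {X : Type*} [MeasurableSpace X] (a : ℝ) (P Q : Measure X) : EReal :=
  if P ≪ Q ∧ ∫⁻ x, (P.rnDeriv Q x) ^ a ∂Q ≠ ⊤ then
    (((a - 1)⁻¹ * Real.log ((∫⁻ x, (P.rnDeriv Q x) ^ a ∂Q).toReal) : ℝ) : EReal)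
  else ⊤


open scoped NNReal ENNReal
open ProbabilityTheory Real MeasureTheory

lemma lintegral_pi_prod' {n : ℕ} (μ : Fin n → Measure ℝ) [∀ i, SigmaFinite (μ i)]
    {f : Fin n → ℝ → ℝ≥0∞} (hf : ∀ i, Measurable (f i)) :
    ∫⁻ x, ∏ i, f i (x i) ∂Measure.pi μ = ∏ i, ∫⁻ x, f i x ∂(μ i) := by
  induction n with
  | zero => simp [lintegral_const]
  | succ n ih =>
    have h := (measurePreserving_piFinSuccAbove μ 0)
    have hmap := h.map_eq
    have key : ∫⁻ x, ∏ i, f i (x i) ∂Measure.pi μ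
        = ∫⁻ y, f 0 y.1 * ∏ j, f (Fin.succ j) (y.2 j)
          ∂((μ 0).prod (Measure.pi fun j => μ (Fin.succAbove 0 j))) := by
      rw [← hmap, lintegral_map_equiv]
      congr 1 with x
      rw [Fin.prod_univ_succ]
      rfl
    have hg : Measurable (fun z : Fin n → ℝ => ∏ j, f (Fin.succ j) (z j)) := by
      exact Finset.measurable_prod _ fun j _ => (hf _).comp (measurable_pi_apply j)
    rw [key, lintegral_prod_mul (hf 0).aemeasurable hg.aemeasurable, Fin.prod_univ_succ]
    congr 1
    simpa using ih (fun j => μ (Fin.succ j)) (fun j => hf _)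


lemma pi_withDensity' {n : ℕ} (μ : Fin n → Measure ℝ) [∀ i, SigmaFinite (μ i)]
    {f : Fin n → ℝ → ℝ≥0∞} (hf : ∀ i, Measurable (f i))
    [∀ i, SigmaFinite ((μ i).withDensity (f i))] :
    Measure.pi (fun i => (μ i).withDensity (f i))
      = (Measure.pi μ).withDensity (fun x => ∏ i, f i (x i)) := by
  refine Measure.pi_eq (μ := fun i => (μ i).withDensity (f i)) fun s hs => ?_
  rw [withDensity_apply _ (MeasurableSet.univ_pi hs)]
  have : ∫⁻ x in Set.univ.pi s, ∏ i, f i (x i) ∂Measure.pi μ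
      = ∫⁻ x, ∏ i, (s i).indicator (f i) (x i) ∂Measure.pi μ := by
    rw [← lintegral_indicator (MeasurableSet.univ_pi hs)]
    congr 1 with x
    by_cases hx : x ∈ Set.univ.pi s
    · rw [Set.indicator_of_mem hx]
      exact Finset.prod_congr rfl fun i _ =>
        (Set.indicator_of_mem (hx i (Set.mem_univ i)) _).symm
    · rw [Set.indicator_of_notMem hx]
      simp only [Set.mem_pi, Set.mem_univ, forall_true_left, not_forall] at hx
      obtain ⟨i, hi⟩ := hx
      exact (Finset.prod_eq_zero (Finset.mem_univ i) (Set.indicator_of_notMem hi _)).symm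
  rw [this, lintegral_pi_prod' μ (fun i => (hf i).indicator (hs i))]
  exact Finset.prod_congr rfl fun i _ => by
    rw [lintegral_indicator (hs i), withDensity_apply _ (hs i)]

noncomputable def Gval (α μ μ' : ℝ) (v w : ℝ≥0) : ℝ :=
  (Real.sqrt (2 * π * v))⁻¹ ^ α * (Real.sqrt (2 * π * w))⁻¹ ^ (1 - α) *
    Real.exp (α * (α - 1) * (μ - μ') ^ 2 / (2 * (α * w + (1 - α) * v))) *
    Real.sqrt (π / ((α * w + (1 - α) * v) / (2 * v * w)))

lemma exponent_eq (α μ μ' : ℝ) (v w : ℝ) (hv : 0 < v) (hw : 0 < w)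
    (hm : 0 < α * w + (1 - α) * v) (x : ℝ) :
    α * (-(x - μ) ^ 2 / (2 * v)) + (1 - α) * (-(x - μ') ^ 2 / (2 * w)) =
      α * (α - 1) * (μ - μ') ^ 2 / (2 * (α * w + (1 - α) * v)) +
      (-((α * w + (1 - α) * v) / (2 * v * w)) *
        (x - (α * w * μ + (1 - α) * v * μ') / (α * w + (1 - α) * v)) ^ 2) := by
  have hD := hm.ne'
  generalize hDdef : α * w + (1 - α) * v = D at hD ⊢
  field_simp
  rw [← hDdef]
  ring

lemma pdf_rpow_mul (α μ μ' : ℝ) (v w : ℝ≥0) (hv : 0 < v) (hw : 0 < w)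
    (hm : 0 < α * w + (1 - α) * v) (x : ℝ) :
    gaussianPDFReal μ v x ^ α * gaussianPDFReal μ' w x ^ (1 - α) =
      (Real.sqrt (2 * π * v))⁻¹ ^ α * (Real.sqrt (2 * π * w))⁻¹ ^ (1 - α) *
        Real.exp (α * (α - 1) * (μ - μ') ^ 2 / (2 * (α * w + (1 - α) * v))) *
        Real.exp (-((α * w + (1 - α) * v) / (2 * v * w)) *
          (x - (α * w * μ + (1 - α) * v * μ') / (α * w + (1 - α) * v)) ^ 2) := by
  have hv' : (0:ℝ) < v := hv
  have hw' : (0:ℝ) < w := hw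
  have h1 : (0:ℝ) ≤ (Real.sqrt (2 * π * v))⁻¹ := by positivity
  have h2 : (0:ℝ) ≤ (Real.sqrt (2 * π * w))⁻¹ := by positivity
  have hexp : ∀ (t a : ℝ), Real.exp t ^ a = Real.exp (a * t) := fun t a => by
    rw [Real.rpow_def_of_pos (Real.exp_pos t), Real.log_exp, mul_comm]
  rw [gaussianPDFReal, gaussianPDFReal, Real.mul_rpow h1 (Real.exp_pos _).le,
    Real.mul_rpow h2 (Real.exp_pos _).le, hexp, hexp]
  rw [show ∀ a b c d : ℝ, a * b * (c * d) = a * c * (b * d) from fun a b c d => by ring,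
    ← Real.exp_add, exponent_eq α μ μ' v w hv' hw' hm x, Real.exp_add]
  ring

lemma integral_pdf_rpow_mul (α μ μ' : ℝ) (v w : ℝ≥0) (hv : 0 < v) (hw : 0 < w)
    (hm : 0 < α * w + (1 - α) * v) :
    ∫ x, gaussianPDFReal μ v x ^ α * gaussianPDFReal μ' w x ^ (1 - α) = Gval α μ μ' v w := by
  have hb : (0:ℝ) < (α * w + (1 - α) * v) / (2 * v * w) := by positivity
  simp_rw [pdf_rpow_mul α μ μ' v w hv hw hm]
  rw [integral_const_mul]
  unfold Gval
  congr 1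
  rw [integral_sub_right_eq_self (μ := volume)
    (fun x : ℝ => Real.exp (-((α * ↑w + (1 - α) * ↑v) / (2 * ↑v * ↑w)) * x ^ 2))
    ((α * ↑w * μ + (1 - α) * ↑v * μ') / (α * ↑w + (1 - α) * ↑v))]
  exact integral_gaussian _

lemma integrable_pdf_rpow_mul (α μ μ' : ℝ) (v w : ℝ≥0) (hv : 0 < v) (hw : 0 < w)
    (hm : 0 < α * w + (1 - α) * v) :
    Integrable (fun x => gaussianPDFReal μ v x ^ α * gaussianPDFReal μ' w x ^ (1 - α)) := by
  have hb : (0:ℝ) < (α * w + (1 - α) * v) / (2 * v * w) := by positivity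
  have := ((integrable_exp_neg_mul_sq hb).comp_sub_right
    ((α * ↑w * μ + (1 - α) * ↑v * μ') / (α * ↑w + (1 - α) * ↑v))).const_mul
    ((Real.sqrt (2 * π * v))⁻¹ ^ α * (Real.sqrt (2 * π * w))⁻¹ ^ (1 - α) *
      Real.exp (α * (α - 1) * (μ - μ') ^ 2 / (2 * (α * w + (1 - α) * v))))
  refine this.congr ?_
  filter_upwards with x
  rw [pdf_rpow_mul α μ μ' v w hv hw hm x]

lemma lintegral_rpow_div (α : ℝ) (hα : 1 < α) (μ μ' : ℝ) (v w : ℝ≥0) (hv : 0 < v) (hw : 0 < w)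
    (hm : 0 < α * w + (1 - α) * v) :
    ∫⁻ x, (gaussianPDF μ v x / gaussianPDF μ' w x) ^ α ∂(gaussianReal μ' w)
      = ENNReal.ofReal (Gval α μ μ' v w) := by
  have hmeas : Measurable (fun x => (gaussianPDF μ v x / gaussianPDF μ' w x) ^ α) :=
    ((measurable_gaussianPDF μ v).div (measurable_gaussianPDF μ' w)).pow_const α
  rw [gaussianReal_of_var_ne_zero _ hw.ne',
    lintegral_withDensity_eq_lintegral_mul _ (measurable_gaussianPDF _ _) hmeas]
  have hpt : ∀ x : ℝ, (gaussianPDF μ' w * fun x => (gaussianPDF μ v x / gaussianPDF μ' w x) ^ α) x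
      = ENNReal.ofReal (gaussianPDFReal μ v x ^ α * gaussianPDFReal μ' w x ^ (1 - α)) := by
    intro x
    have hp : 0 < gaussianPDFReal μ v x := gaussianPDFReal_pos _ _ _ hv.ne'
    have hq : 0 < gaussianPDFReal μ' w x := gaussianPDFReal_pos _ _ _ hw.ne'
    simp only [Pi.mul_apply, gaussianPDF]
    rw [← ENNReal.ofReal_div_of_pos hq, ENNReal.ofReal_rpow_of_pos (div_pos hp hq),
      ← ENNReal.ofReal_mul hq.le]
    congr 1
    rw [Real.div_rpow hp.le hq.le, Real.rpow_sub hq, Real.rpow_one]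
    have : gaussianPDFReal μ' w x ^ α ≠ 0 := by positivity
    field_simp
  rw [lintegral_congr hpt,
    ← ofReal_integral_eq_lintegral_ofReal (integrable_pdf_rpow_mul α μ μ' v w hv hw hm)
      (Filter.Eventually.of_forall fun x => mul_nonneg
        (Real.rpow_nonneg (gaussianPDFReal_nonneg _ _ _) _)
        (Real.rpow_nonneg (gaussianPDFReal_nonneg _ _ _) _)),
    integral_pdf_rpow_mul α μ μ' v w hv hw hm]

lemma gaussian_eq_withDensity (μ μ' : ℝ) (v w : ℝ≥0) (hv : 0 < v) (hw : 0 < w) :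
    gaussianReal μ v = (gaussianReal μ' w).withDensity
      (fun x => gaussianPDF μ v x / gaussianPDF μ' w x) := by
  rw [gaussianReal_of_var_ne_zero _ hw.ne', gaussianReal_of_var_ne_zero _ hv.ne',
    ← withDensity_mul _ (g := fun x => gaussianPDF μ v x / gaussianPDF μ' w x) (measurable_gaussianPDF _ _)
      ((measurable_gaussianPDF μ v).div (measurable_gaussianPDF μ' w))]
  congr 1 with x
  exact (ENNReal.mul_div_cancel (gaussianPDF_pos μ' hw.ne' x).ne' ENNReal.ofReal_ne_top).symm

lemma Gval_pos (α μ μ' : ℝ) (v w : ℝ≥0) (hv : 0 < v) (hw : 0 < w)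
    (hm : 0 < α * w + (1 - α) * v) : 0 < Gval α μ μ' v w := by
  have hv' : (0:ℝ) < v := hv
  have hw' : (0:ℝ) < w := hw
  rw [Gval]
  have h1 : (0:ℝ) < (Real.sqrt (2 * π * v))⁻¹ := by positivity
  have h2 : (0:ℝ) < (Real.sqrt (2 * π * w))⁻¹ := by positivity
  have h3 : (0:ℝ) < π / ((α * ↑w + (1 - α) * ↑v) / (2 * ↑v * ↑w)) := by positivity
  positivity

lemma renyi_summand_eq (α : ℝ) (hα : 1 < α) (μ μ' : ℝ) (v w : ℝ≥0) (hv : 0 < v) (hw : 0 < w)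
    (hm : 0 < α * w + (1 - α) * v) :
    (α - 1)⁻¹ * Real.log (Gval α μ μ' v w) =
      α * (μ - μ') ^ 2 / (2 * (α * w + (1 - α) * v)) -
        (1 / (2 * (α - 1))) * Real.log ((α * w + (1 - α) * v) / ((v:ℝ) ^ (1 - α) * (w:ℝ) ^ α)) := by
  have hv' : (0:ℝ) < v := hv
  have hw' : (0:ℝ) < w := hw
  have hπ : (0:ℝ) < π := Real.pi_pos
  have hA : (0:ℝ) < (Real.sqrt (2 * π * v))⁻¹ := by positivity
  have hB : (0:ℝ) < (Real.sqrt (2 * π * w))⁻¹ := by positivity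
  have hb : (0:ℝ) < (α * ↑w + (1 - α) * ↑v) / (2 * ↑v * ↑w) := by positivity
  have hα1 : α - 1 ≠ 0 := by linarith
  have lA : Real.log ((Real.sqrt (2 * π * v))⁻¹ ^ α)
      = α * (-(Real.log 2 + Real.log π + Real.log v) / 2) := by
    rw [Real.log_rpow hA, Real.log_inv, Real.log_sqrt (by positivity),
      Real.log_mul (by positivity) hv'.ne', Real.log_mul two_ne_zero hπ.ne']
    ring
  have lB : Real.log ((Real.sqrt (2 * π * w))⁻¹ ^ (1 - α))
      = (1 - α) * (-(Real.log 2 + Real.log π + Real.log w) / 2) := by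
    rw [Real.log_rpow hB, Real.log_inv, Real.log_sqrt (by positivity),
      Real.log_mul (by positivity) hw'.ne', Real.log_mul two_ne_zero hπ.ne']
    ring
  have lS : Real.log (Real.sqrt (π / ((α * ↑w + (1 - α) * ↑v) / (2 * ↑v * ↑w))))
      = (Real.log π - (Real.log (α * ↑w + (1 - α) * ↑v)
          - (Real.log 2 + Real.log v + Real.log w))) / 2 := by
    rw [Real.log_sqrt (by positivity), Real.log_div hπ.ne' hb.ne',
      Real.log_div hm.ne' (by positivity), Real.log_mul (by positivity) hw'.ne',
      Real.log_mul two_ne_zero hv'.ne']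
  have lG : Real.log (Gval α μ μ' v w)
      = α * (-(Real.log 2 + Real.log π + Real.log v) / 2)
        + (1 - α) * (-(Real.log 2 + Real.log π + Real.log w) / 2)
        + α * (α - 1) * (μ - μ') ^ 2 / (2 * (α * ↑w + (1 - α) * ↑v))
        + (Real.log π - (Real.log (α * ↑w + (1 - α) * ↑v)
            - (Real.log 2 + Real.log v + Real.log w))) / 2 := by
    rw [Gval, Real.log_mul (by positivity) (by positivity),
      Real.log_mul (by positivity) (Real.exp_ne_zero _), Real.log_exp,
      Real.log_mul (by positivity) (by positivity), lA, lB, lS]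
  rw [lG, Real.log_div hm.ne' (by positivity),
    Real.log_mul (by positivity) (by positivity),
    Real.log_rpow hv', Real.log_rpow hw']
  field_simp
  ring

open ProbabilityTheory in
/-- Rényi divergence between two products of one-dimensional Gaussians with diagonal
covariances `diag(s)` and `diag(s’)`. -/
theorem renyiDiv_pi_gaussianReal {d : ℕ} (α : ℝ) (hα : 1 < α)
    (μ μ' : Fin d → ℝ) (s s' : Fin d → NNReal)
    (hs : ∀ j, 0 < s j) (hs' : ∀ j, 0 < s' j)
    (hmix : ∀ j, 0 < α * (s' j : ℝ) + (1 - α) * (s j : ℝ)) :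
    renyiDiv α (Measure.pi fun j => gaussianReal (μ j) (s j))
        (Measure.pi fun j => gaussianReal (μ' j) (s' j)) =
      ((∑ j, (α * (μ j - μ' j) ^ 2 / (2 * (α * (s' j : ℝ) + (1 - α) * (s j : ℝ))) -
          (1 / (2 * (α - 1))) * Real.log ((α * (s' j : ℝ) + (1 - α) * (s j : ℝ)) /
            ((s j : ℝ) ^ (1 - α) * (s' j : ℝ) ^ α)) ) : ℝ) : EReal) := by
  set r : Fin d → ℝ → ℝ≥0∞ :=
    fun j x => gaussianPDF (μ j) (s j) x / gaussianPDF (μ' j) (s' j) x with hr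
  have hrmeas : ∀ j, Measurable (r j) :=
    fun j => (measurable_gaussianPDF _ _).div (measurable_gaussianPDF _ _)
  have heq : ∀ j, gaussianReal (μ j) (s j)
      = (gaussianReal (μ' j) (s' j)).withDensity (r j) :=
    fun j => gaussian_eq_withDensity _ _ _ _ (hs j) (hs' j)
  have hsf : ∀ j, SigmaFinite ((gaussianReal (μ' j) (s' j)).withDensity (r j)) := by
    intro j; rw [← heq j]; infer_instance
  have hP : (Measure.pi fun j => gaussianReal (μ j) (s j))
      = (Measure.pi fun j => gaussianReal (μ' j) (s' j)).withDensity
          (fun x => ∏ j, r j (x j)) := by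
    haveI := hsf
    rw [show (fun j => gaussianReal (μ j) (s j))
      = fun j => (gaussianReal (μ' j) (s' j)).withDensity (r j) from funext heq]
    exact pi_withDensity' _ hrmeas
  have hg : Measurable (fun x : Fin d → ℝ => ∏ j, r j (x j)) :=
    Finset.measurable_prod _ fun j _ => (hrmeas j).comp (measurable_pi_apply j)
  have hac : (Measure.pi fun j => gaussianReal (μ j) (s j))
      ≪ (Measure.pi fun j => gaussianReal (μ' j) (s' j)) := by
    rw [hP]; exact withDensity_absolutelyContinuous _ _
  have hrn : (Measure.pi fun j => gaussianReal (μ j) (s j)).rnDeriv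
        (Measure.pi fun j => gaussianReal (μ' j) (s' j))
      =ᵐ[Measure.pi fun j => gaussianReal (μ' j) (s' j)] (fun x => ∏ j, r j (x j)) := by
    rw [hP]; exact Measure.rnDeriv_withDensity _ hg
  have hint : ∫⁻ x, ((Measure.pi fun j => gaussianReal (μ j) (s j)).rnDeriv
        (Measure.pi fun j => gaussianReal (μ' j) (s' j)) x) ^ α
        ∂(Measure.pi fun j => gaussianReal (μ' j) (s' j))
      = ENNReal.ofReal (∏ j, Gval α (μ j) (μ' j) (s j) (s' j)) := by
    rw [lintegral_congr_ae ((hrn.mono fun x hx => by simp only [hx]) :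
      (fun x => ((Measure.pi fun j => gaussianReal (μ j) (s j)).rnDeriv
        (Measure.pi fun j => gaussianReal (μ' j) (s' j)) x) ^ α)
        =ᵐ[Measure.pi fun j => gaussianReal (μ' j) (s' j)]
      (fun x => (∏ j, r j (x j)) ^ α))]
    have : ∀ x : Fin d → ℝ, (∏ j, r j (x j)) ^ α = ∏ j, (r j (x j)) ^ α :=
      fun x => (ENNReal.prod_rpow_of_nonneg (by linarith : (0:ℝ) ≤ α)).symm
    simp_rw [this]
    rw [lintegral_pi_prod' _ (fun j => (hrmeas j).pow_const α)]
    rw [Finset.prod_congr rfl fun j _ =>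
      lintegral_rpow_div α hα (μ j) (μ' j) (s j) (s' j) (hs j) (hs' j) (hmix j)]
    exact (ENNReal.ofReal_prod_of_nonneg fun j _ =>
      (Gval_pos α (μ j) (μ' j) (s j) (s' j) (hs j) (hs' j) (hmix j)).le).symm
  rw [renyiDiv, if_pos ⟨hac, by rw [hint]; exact ENNReal.ofReal_ne_top⟩, hint,
    ENNReal.toReal_ofReal (Finset.prod_nonneg fun j _ =>
      (Gval_pos α (μ j) (μ' j) (s j) (s' j) (hs j) (hs' j) (hmix j)).le)]
  congr 1
  rw [Real.log_prod fun j _ =>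
    (Gval_pos α (μ j) (μ' j) (s j) (s' j) (hs j) (hs' j) (hmix j)).ne', Finset.mul_sum]
  exact Finset.sum_congr rfl fun j _ =>
    renyi_summand_eq α hα (μ j) (μ' j) (s j) (s' j) (hs j) (hs' j) (hmix j)
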